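/- Let P : E → B be a pseudofunctor between bicategories that is a 1-fibration (in particular P could be a fibration). If B is pseudocofiltered, i.e., B satisfies (0-pFlt^op): for any 1-cells u : A → C and v : B → C there exist an object D and 1-cells r : D → A, s : D → B; (1-pFlt^op): for any parallel 1-cells f, g : A → B there exist an object C, a 1-cell u : C → A and a 2-cell γ : f ∘ u ⟹ g ∘ u; and (2-pFlt^op): for any parallel 2-cells α, β : f ⟹ g : A → B there exist an object C and a 1-cell u : C → A with α ▷ u = β ▷ u; then the class of all P-Cartesian 1-cells of E admits a right bicalculus of fractions. -/

import Mathlib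

open CategoryTheory Bicategory

universe w₁ v₁ u₁ w₂ v₂ u₂ w v u

namespace Paper

section Fractions

variable (B : Type u) [Bicategory.{w, v} B]

/-- A 1-cell is an equivalence if there is a 1-cell in the opposite direction and invertible
2-cells relating the two composites to identities. -/
def IsEquiv1Cell {a b : B} (f : a ⟶ b) : Prop :=
  ∃ g : b ⟶ a, Nonempty (f ≫ g ≅ 𝟙 a) ∧ Nonempty (g ≫ f ≅ 𝟙 b)

/-- Axiom (0-Frc). -/
def Frc0 (W : ∀ ⦃a b : B⦄, (a ⟶ b) → Prop) : Prop :=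
  ∀ ⦃A B' C : B⦄ (w : A ⟶ B') (f : C ⟶ B'), W w →
    ∃ (D : B) (u : D ⟶ C) (h : D ⟶ A), W u ∧ Nonempty (u ≫ f ≅ h ≫ w)

/-- Axiom (1-Frc). -/
def Frc1 (W : ∀ ⦃a b : B⦄, (a ⟶ b) → Prop) : Prop :=
  ∀ ⦃B' C D : B⦄ (w : C ⟶ D) (f g : B' ⟶ C), W w → ∀ α : f ≫ w ⟶ g ≫ w,
    ∃ (A : B) (u : A ⟶ B'), W u ∧ ∃ β : u ≫ f ⟶ u ≫ g,
      (u ◁ α) ≫ (α_ u g w).inv = (α_ u f w).inv ≫ (β ▷ w)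

/-- Axiom (2-Frc). -/
def Frc2 (W : ∀ ⦃a b : B⦄, (a ⟶ b) → Prop) : Prop :=
  ∀ ⦃B' C D : B⦄ (w : C ⟶ D) (f g : B' ⟶ C), W w → ∀ α β : f ⟶ g,
    α ▷ w = β ▷ w → ∃ (A : B) (u : A ⟶ B'), W u ∧ u ◁ α = u ◁ β

/-- A class of 1-cells admits a right bicalculus of fractions. -/
structure RightBicalculus (W : ∀ ⦃a b : B⦄, (a ⟶ b) → Prop) : Prop where
  equivalences : ∀ ⦃a b : B⦄ (f : a ⟶ b), IsEquiv1Cell B f → W f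
  comp : ∀ ⦃a b c : B⦄ (f : a ⟶ b) (g : b ⟶ c), W f → W g → W (f ≫ g)
  iso_closed : ∀ ⦃a b : B⦄ (f w : a ⟶ b), W w → Nonempty (f ≅ w) → W f
  frc0 : Frc0 B W
  frc1 : Frc1 B W
  frc2 : Frc2 B W

end Fractions

section Cartesian

variable {E : Type u₁} [Bicategory.{w₁, v₁} E] {B : Type u₂} [Bicategory.{w₂, v₂} B]

/-- A 1-cell `f : X ⟶ Y` of `E` is `P`-Cartesian. -/
def IsCartesian (P : Pseudofunctor E B) {X Y : E} (f : X ⟶ Y) : Prop :=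
  (∀ (Z : E) (g : Z ⟶ Y) (h : P.obj Z ⟶ P.obj X) (α : h ≫ P.map f ≅ P.map g),
    ∃ (hHat : Z ⟶ X) (aHat : hHat ≫ f ≅ g) (bHat : P.map hHat ≅ h),
      (bHat.hom ▷ P.map f) ≫ α.hom = (P.mapComp hHat f).inv ≫ P.map₂ aHat.hom) ∧
  (∀ (Z : E) (g h : Z ⟶ X) (α : g ≫ f ⟶ h ≫ f) (β : P.map g ⟶ P.map h),
    P.map₂ α = (P.mapComp g f).hom ≫ (β ▷ P.map f) ≫ (P.mapComp h f).inv →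
      ∃ bHat : g ⟶ h, P.map₂ bHat = β ∧ bHat ▷ f = α) ∧
  (∀ (Z : E) (g h : Z ⟶ X) (α β : g ⟶ h), P.map₂ α = P.map₂ β → α ▷ f = β ▷ f → α = β)

/-- `P` is a 1-fibration: every 1-cell into the image of an object admits a Cartesian lift. -/
def Is1Fibration (P : Pseudofunctor E B) : Prop :=
  ∀ (E₀ : E) ⦃B₀ : B⦄ (f : B₀ ⟶ P.obj E₀),
    ∃ (Bhat : E) (fhat : Bhat ⟶ E₀) (hB : P.obj Bhat = B₀),
      IsCartesian P fhat ∧ P.map fhat = cast (congrArg (fun x => (x ⟶ P.obj E₀)) hB.symm) f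

end Cartesian

section Helpers
variable {B : Type u} [Bicategory.{w, v} B]

/-- Postcomposition with an equivalence 1-cell is an equivalence of hom-categories. -/
def postcompEquiv {a b : B} (Z : B) (f : a ⟶ b) (g : b ⟶ a) (η : f ≫ g ≅ 𝟙 a)
    (ε₁ : g ≫ f ≅ 𝟙 b) : (Z ⟶ a) ≌ (Z ⟶ b) :=
  CategoryTheory.Equivalence.mk (postcomp Z f) (postcomp Z g)
    (NatIso.ofComponents (fun s => (ρ_ s).symm ≪≫ whiskerLeftIso s η.symm ≪≫ (α_ s f g).symm)
      (by intros X Y τ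
          dsimp only [postcomp, Iso.trans_hom, Iso.symm_hom, whiskerLeftIso_hom]
          simp only [Iso.trans_hom, Iso.symm_hom, whiskerLeftIso_hom, postcomp_obj, Functor.comp_obj,
            Functor.id_obj, Functor.comp_map, postcomp_map, Functor.id_map]
          rw [rightUnitor_inv_naturality_assoc, ← whisker_exchange_assoc,
            associator_inv_naturality_left]
          simp only [Category.assoc]))
    (NatIso.ofComponents (fun s => (α_ s g f) ≪≫ whiskerLeftIso s ε₁ ≪≫ (ρ_ s))
      (by intros X Y τ
          dsimp only [postcomp, Iso.trans_hom, Iso.symm_hom, whiskerLeftIso_hom]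
          simp only [Iso.trans_hom, whiskerLeftIso_hom, postcomp_obj, Functor.comp_obj,
            Functor.id_obj, Functor.comp_map, postcomp_map, Functor.id_map]
          rw [associator_naturality_left_assoc, ← whisker_exchange_assoc]
          simp))

lemma wr_inj {a b : B} {f : a ⟶ b} (hf : IsEquiv1Cell B f) {Z : B} {s t : Z ⟶ a}
    {τ τ' : s ⟶ t} (h : τ ▷ f = τ' ▷ f) : τ = τ' := by
  obtain ⟨g, ⟨η⟩, ⟨ε₁⟩⟩ := hf
  exact (postcompEquiv Z f g η ε₁).functor.map_injective h

lemma wr_full {a b : B} {f : a ⟶ b} (hf : IsEquiv1Cell B f) {Z : B} {s t : Z ⟶ a}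
    (Θ : s ≫ f ⟶ t ≫ f) : ∃ τ : s ⟶ t, τ ▷ f = Θ := by
  obtain ⟨g, ⟨η⟩, ⟨ε₁⟩⟩ := hf
  exact ⟨(postcompEquiv Z f g η ε₁).fullyFaithfulFunctor.preimage Θ,
    (postcompEquiv Z f g η ε₁).fullyFaithfulFunctor.map_preimage Θ⟩

lemma wr_full_iso {a b : B} {f : a ⟶ b} (hf : IsEquiv1Cell B f) {Z : B} {s t : Z ⟶ a}
    (Θ : s ≫ f ≅ t ≫ f) : ∃ τ : s ≅ t, τ.hom ▷ f = Θ.hom := by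
  obtain ⟨g, ⟨η⟩, ⟨ε₁⟩⟩ := hf
  exact ⟨(postcompEquiv Z f g η ε₁).fullyFaithfulFunctor.preimageIso Θ,
    (postcompEquiv Z f g η ε₁).fullyFaithfulFunctor.map_preimage Θ.hom⟩

/-- In a pseudocofiltered bicategory every 2-cell becomes invertible after restriction. -/
lemma invert2cell
    (h1 : ∀ ⦃A B' : B⦄ (f g : A ⟶ B'), ∃ (C : B) (u : C ⟶ A) (_ : u ≫ f ⟶ u ≫ g), True)
    (h2 : ∀ ⦃A B' : B⦄ (f g : A ⟶ B') (α β : f ⟶ g), ∃ (C : B) (u : C ⟶ A), u ◁ α = u ◁ β)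
    {a b : B} {x y : a ⟶ b} (γ : x ⟶ y) :
    ∃ (C : B) (u : C ⟶ a), IsIso (u ◁ γ) := by
  obtain ⟨C₁, u₁, δ, -⟩ := h1 y x
  obtain ⟨C₂, u₂, e₂⟩ := h2 _ _ ((u₁ ◁ γ) ≫ δ) (𝟙 _)
  obtain ⟨C₃, u₃, e₃⟩ := h2 _ _ (u₂ ◁ (δ ≫ (u₁ ◁ γ))) (𝟙 _)
  refine ⟨C₃, (u₃ ≫ u₂) ≫ u₁, ?_⟩
  have hiso : IsIso (u₃ ◁ (u₂ ◁ (u₁ ◁ γ))) := by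
    refine ⟨u₃ ◁ (u₂ ◁ δ), ?_, ?_⟩
    · rw [← Bicategory.whiskerLeft_comp, ← Bicategory.whiskerLeft_comp, e₂]
      simp
    · rw [← Bicategory.whiskerLeft_comp, ← Bicategory.whiskerLeft_comp, e₃]
      simp
  rw [comp_whiskerLeft, comp_whiskerLeft]
  infer_instance

end Helpers

section PHelpers
variable {E : Type u₁} [Bicategory.{w₁, v₁} E] {B : Type u₂} [Bicategory.{w₂, v₂} B]

lemma isEquiv_map (P : Pseudofunctor E B) {a b : E} {f : a ⟶ b} (hf : IsEquiv1Cell E f) :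
    IsEquiv1Cell B (P.map f) := by
  obtain ⟨g, ⟨η⟩, ⟨ε₁⟩⟩ := hf
  exact ⟨P.map g, Nonempty.intro ((P.mapComp f g).symm ≪≫ P.map₂Iso η ≪≫ P.mapId a),
    Nonempty.intro ((P.mapComp g f).symm ≪≫ P.map₂Iso ε₁ ≪≫ P.mapId b)⟩

end PHelpers

section CartLemmas
variable {E : Type u₁} [Bicategory.{w₁, v₁} E] {B : Type u₂} [Bicategory.{w₂, v₂} B]

lemma equiv_isCartesian (P : Pseudofunctor E B) {X Y : E} {f : X ⟶ Y}
    (hf : IsEquiv1Cell E f) : IsCartesian P f := by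
  have hPf : IsEquiv1Cell B (P.map f) := isEquiv_map P hf
  obtain ⟨g, ⟨η⟩, ⟨ε₁⟩⟩ := hf
  have hf' : IsEquiv1Cell E f := ⟨g, ⟨η⟩, ⟨ε₁⟩⟩
  refine ⟨?_, ?_, ?_⟩
  · intro Z g' h α
    let aHat : (g' ≫ g) ≫ f ≅ g' := (α_ g' g f) ≪≫ whiskerLeftIso g' ε₁ ≪≫ (ρ_ g')
    let Θ : P.map (g' ≫ g) ≫ P.map f ≅ h ≫ P.map f :=
      (P.mapComp (g' ≫ g) f).symm ≪≫ P.map₂Iso aHat ≪≫ α.symm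
    obtain ⟨bHat, hb⟩ := wr_full_iso hPf Θ
    refine ⟨g' ≫ g, aHat, bHat, ?_⟩
    rw [hb]
    simp [Θ]
  · intro Z s t αE β hcompat
    obtain ⟨bHat, hb⟩ := wr_full hf' αE
    refine ⟨bHat, ?_, hb⟩
    refine wr_inj hPf ?_
    have h1' := P.map₂_whisker_right bHat f
    rw [hb, hcompat] at h1'
    simp only [Iso.cancel_iso_hom_left] at h1'
    have := h1' =≫ (P.mapComp t f).hom
    simpa using this.symm
  · intro Z s t α β _ h
    exact wr_inj hf' h

lemma map₂_associator_inv (P : Pseudofunctor E B) {a b c d : E} (f : a ⟶ b) (g : b ⟶ c)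
    (h : c ⟶ d) :
    P.map₂ (α_ f g h).inv = (P.mapComp f (g ≫ h)).hom ≫ P.map f ◁ (P.mapComp g h).hom ≫
      (α_ (P.map f) (P.map g) (P.map h)).inv ≫ (P.mapComp f g).inv ▷ P.map h ≫
      (P.mapComp (f ≫ g) h).inv := by
  rw [← cancel_epi (P.map₂ (α_ f g h).hom), ← P.map₂_comp]
  simp

lemma isCartesian_comp (P : Pseudofunctor E B) {X Y Z' : E} {f : X ⟶ Y} {g : Y ⟶ Z'}
    (hf : IsCartesian P f) (hg : IsCartesian P g) : IsCartesian P (f ≫ g) := by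
  obtain ⟨f1, f2, f3⟩ := hf
  obtain ⟨g1, g2, g3⟩ := hg
  refine ⟨?_, ?_, ?_⟩
  · intro Z c h α
    let α₁ : (h ≫ P.map f) ≫ P.map g ≅ P.map c :=
      (α_ h (P.map f) (P.map g)) ≪≫ whiskerLeftIso h (P.mapComp f g).symm ≪≫ α
    obtain ⟨c₁, a₁, b₁, e₁⟩ := g1 Z c (h ≫ P.map f) α₁
    obtain ⟨hHat, a₂, b₂, e₂⟩ := f1 Z c₁ h b₁.symm
    refine ⟨hHat, (α_ hHat f g).symm ≪≫ whiskerRightIso a₂ g ≪≫ a₁, b₂, ?_⟩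
    simp only [Iso.trans_hom, Iso.symm_hom, whiskerRightIso_hom, PrelaxFunctor.map₂_comp]
    rw [map₂_associator_inv, P.map₂_whisker_right]
    simp only [Category.assoc, Iso.inv_hom_id_assoc]
    rw [← e₁, ← comp_whiskerRight_assoc, ← e₂]
    simp only [Iso.symm_hom, comp_whiskerRight, Category.assoc, α₁, Iso.trans_hom,
      whiskerLeftIso_hom, inv_hom_whiskerRight_assoc]
    rw [← associator_inv_naturality_left_assoc, Iso.inv_hom_id_assoc, whisker_exchange_assoc]
    simp
  · intro Z s t α β hcompat
    let α' : (s ≫ f) ≫ g ⟶ (t ≫ f) ≫ g := (α_ s f g).hom ≫ α ≫ (α_ t f g).inv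
    let β' : P.map (s ≫ f) ⟶ P.map (t ≫ f) :=
      (P.mapComp s f).hom ≫ (β ▷ P.map f) ≫ (P.mapComp t f).inv
    have key : P.map₂ α' =
        (P.mapComp (s ≫ f) g).hom ≫ (β' ▷ P.map g) ≫ (P.mapComp (t ≫ f) g).inv := by
      simp only [α', β', PrelaxFunctor.map₂_comp]
      rw [hcompat, P.map₂_associator, map₂_associator_inv]
      simp only [Category.assoc, Iso.inv_hom_id_assoc, comp_whiskerRight]
      rw [whisker_exchange_assoc]
      simp [← associator_naturality_left_assoc]
    obtain ⟨γ, hγ1, hγ2⟩ := g2 Z (s ≫ f) (t ≫ f) α' β' key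
    obtain ⟨bHat, hb1, hb2⟩ := f2 Z s t γ β hγ1
    refine ⟨bHat, hb1, ?_⟩
    have : bHat ▷ (f ≫ g) = (α_ s f g).inv ≫ ((bHat ▷ f) ▷ g) ≫ (α_ t f g).hom := by
      simp
    rw [this, hb2, hγ2]
    simp [α']
  · intro Z s t α β hm hw
    have hw' : (α ▷ f) ▷ g = (β ▷ f) ▷ g := by
      have h1 := whiskerRight_comp α f g
      have h2 := whiskerRight_comp β f g
      rw [hw] at h1
      rw [h1] at h2
      simpa using h2
    have hm' : P.map₂ (α ▷ f) = P.map₂ (β ▷ f) := by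
      rw [P.map₂_whisker_right, P.map₂_whisker_right, hm]
    exact f3 _ _ _ _ _ hm (g3 _ _ _ _ _ hm' hw')

lemma isCartesian_of_iso (P : Pseudofunctor E B) {X Y : E} {f w : X ⟶ Y}
    (hw : IsCartesian P w) (ι : f ≅ w) : IsCartesian P f := by
  obtain ⟨w1, w2, w3⟩ := hw
  refine ⟨?_, ?_, ?_⟩
  · intro Z c h α
    obtain ⟨hHat, aHat, bHat, e⟩ := w1 Z c h ((whiskerLeftIso h (P.map₂Iso ι).symm) ≪≫ α)
    refine ⟨hHat, whiskerLeftIso hHat ι ≪≫ aHat, bHat, ?_⟩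
    simp only [Iso.trans_hom, Iso.symm_hom, whiskerLeftIso_hom, PrelaxFunctor.map₂_comp,
      P.map₂Iso_hom, P.map₂Iso_inv] at e ⊢
    rw [P.map₂_whisker_left]
    simp only [Category.assoc, Iso.inv_hom_id_assoc]
    rw [← e]
    rw [whisker_exchange_assoc, ← Bicategory.whiskerLeft_comp_assoc]
    have : P.map₂ ι.hom ≫ P.map₂ ι.inv = 𝟙 _ := by simp
    rw [this]
    simp
  · intro Z s t α β hcompat
    have key : P.map₂ ((s ◁ ι.inv) ≫ α ≫ (t ◁ ι.hom)) =
        (P.mapComp s w).hom ≫ (β ▷ P.map w) ≫ (P.mapComp t w).inv := by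
      simp only [PrelaxFunctor.map₂_comp, P.map₂_whisker_left, hcompat]
      simp only [Category.assoc, Iso.inv_hom_id_assoc]
      rw [whisker_exchange_assoc, ← Bicategory.whiskerLeft_comp_assoc]
      have : P.map₂ ι.inv ≫ P.map₂ ι.hom = 𝟙 _ := by simp
      rw [this]
      simp
    obtain ⟨bHat, hb1, hb2⟩ := w2 Z s t ((s ◁ ι.inv) ≫ α ≫ (t ◁ ι.hom)) β key
    refine ⟨bHat, hb1, ?_⟩
    rw [← cancel_mono (t ◁ ι.hom), ← whisker_exchange, hb2]
    simp
  · intro Z s t α β hm hwh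
    refine w3 Z s t α β hm ?_
    rw [← cancel_epi (s ◁ ι.hom), whisker_exchange, whisker_exchange, hwh]

end CartLemmas

/-- If `P : E ⥤ B` is a 1-fibration and `B` is pseudocofiltered, then the class of all
`P`-Cartesian 1-cells of `E` admits a right bicalculus of fractions. -/
theorem cartesians_fractions_of_pseudocofiltered {E : Type u₁} [Bicategory.{w₁, v₁} E]
    {B : Type u₂} [Bicategory.{w₂, v₂} B]
    (P : Pseudofunctor E B) (hP : Is1Fibration P)
    (h0 : ∀ ⦃A B' C : B⦄ (_ : A ⟶ C) (_ : B' ⟶ C), ∃ (D : B) (_ : D ⟶ A) (_ : D ⟶ B'), True)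
    (h1 : ∀ ⦃A B' : B⦄ (f g : A ⟶ B'), ∃ (C : B) (u : C ⟶ A) (_ : u ≫ f ⟶ u ≫ g), True)
    (h2 : ∀ ⦃A B' : B⦄ (f g : A ⟶ B') (α β : f ⟶ g), ∃ (C : B) (u : C ⟶ A), u ◁ α = u ◁ β) :
    RightBicalculus E (fun _ _ f => IsCartesian P f) := by
  refine ⟨fun a b f hf => equiv_isCartesian P hf,
    fun a b c f g hf hg => isCartesian_comp P hf hg,
    fun a b f w hw hi => isCartesian_of_iso P hw hi.some, ?_, ?_, ?_⟩
  · -- frc0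
    intro A B' C w f hw
    obtain ⟨D₀, r, s, -⟩ := h0 (P.map f) (P.map w)
    obtain ⟨C₀, u₀, γ, -⟩ := h1 (r ≫ P.map f) (s ≫ P.map w)
    obtain ⟨C₁, u₁, hiso⟩ := invert2cell h1 h2 γ
    obtain ⟨Dh, uh, hB, hcart, hmap⟩ := hP C (u₁ ≫ (u₀ ≫ r))
    subst hB
    rw [cast_eq] at hmap
    let θ : (u₁ ≫ (u₀ ≫ r)) ≫ P.map f ≅ (u₁ ≫ (u₀ ≫ s)) ≫ P.map w :=
      (α_ u₁ (u₀ ≫ r) (P.map f)) ≪≫ whiskerLeftIso u₁ (α_ u₀ r (P.map f)) ≪≫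
        asIso (u₁ ◁ γ) ≪≫ (whiskerLeftIso u₁ (α_ u₀ s (P.map w))).symm ≪≫
        (α_ u₁ (u₀ ≫ s) (P.map w)).symm
    obtain ⟨hHat, aHat, bHat, -⟩ := hw.1 Dh (uh ≫ f) (u₁ ≫ (u₀ ≫ s))
      (θ.symm ≪≫ (whiskerRightIso (eqToIso hmap) (P.map f)).symm ≪≫ (P.mapComp uh f).symm)
    exact ⟨Dh, uh, hHat, hcart, ⟨aHat.symm⟩⟩
  · -- frc1
    intro B'' C D w f g hw α
    obtain ⟨α₀, hα₀⟩ : ∃ α₀ : P.map f ≫ P.map w ⟶ P.map g ≫ P.map w,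
        P.map₂ α = (P.mapComp f w).hom ≫ α₀ ≫ (P.mapComp g w).inv :=
      ⟨(P.mapComp f w).inv ≫ P.map₂ α ≫ (P.mapComp g w).hom, by simp⟩
    obtain ⟨C₁, u₁, δ, -⟩ := h1 (P.map f) (P.map g)
    obtain ⟨C₂, u₂, he⟩ := h2 _ _ (u₁ ◁ α₀)
      ((α_ u₁ (P.map f) (P.map w)).inv ≫
        (δ ▷ P.map w) ≫ (α_ u₁ (P.map g) (P.map w)).hom)
    obtain ⟨Ah, uh, hB, hcart, hmap⟩ := hP B'' (u₂ ≫ u₁)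
    subst hB
    rw [cast_eq] at hmap
    obtain ⟨Δ₁, he'⟩ : ∃ Δ₁ : P.map uh ≫ P.map f ⟶ P.map uh ≫ P.map g,
        P.map uh ◁ α₀ =
          (α_ (P.map uh) (P.map f) (P.map w)).inv ≫ (Δ₁ ▷ P.map w) ≫
            (α_ (P.map uh) (P.map g) (P.map w)).hom := by
      rw [hmap]
      refine ⟨(α_ u₂ u₁ (P.map f)).hom ≫ (u₂ ◁ δ) ≫ (α_ u₂ u₁ (P.map g)).inv, ?_⟩
      rw [comp_whiskerLeft, he]
      bicategory
    have compat : P.map₂ ((α_ uh f w).hom ≫ (uh ◁ α) ≫ (α_ uh g w).inv) =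
        (P.mapComp (uh ≫ f) w).hom ≫
          (((P.mapComp uh f).hom ≫ Δ₁ ≫ (P.mapComp uh g).inv) ▷ P.map w) ≫
          (P.mapComp (uh ≫ g) w).inv := by
      simp only [PrelaxFunctor.map₂_comp, P.map₂_whisker_left, P.map₂_associator,
        map₂_associator_inv, hα₀, Bicategory.whiskerLeft_comp, Category.assoc,
        Iso.inv_hom_id_assoc, Iso.hom_inv_id_assoc]
      rw [← Bicategory.whiskerLeft_comp_assoc]
      simp only [Category.assoc, Iso.inv_hom_id, Category.comp_id]
      rw [he']
      simp
    obtain ⟨bHat, -, hb2⟩ := hw.2.1 Ah (uh ≫ f) (uh ≫ g)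
      ((α_ uh f w).hom ≫ (uh ◁ α) ≫ (α_ uh g w).inv)
      ((P.mapComp uh f).hom ≫ Δ₁ ≫ (P.mapComp uh g).inv) compat
    refine ⟨Ah, uh, hcart, bHat, ?_⟩
    rw [hb2]
    simp
  · -- frc2
    intro B'' C D w f g hw α β hαβ
    obtain ⟨C₀, u₀, he⟩ := h2 (P.map f) (P.map g) (P.map₂ α) (P.map₂ β)
    obtain ⟨Ah, uh, hB, hcart, hmap⟩ := hP B'' u₀
    subst hB
    rw [cast_eq] at hmap
    rw [← hmap] at he
    refine ⟨Ah, uh, hcart, ?_⟩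
    refine hw.2.2 Ah (uh ≫ f) (uh ≫ g) (uh ◁ α) (uh ◁ β) ?_ ?_
    · rw [P.map₂_whisker_left, P.map₂_whisker_left, he]
    · rw [whisker_assoc, whisker_assoc, hαβ]


end Paper
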